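/- arXiv:1506.03470 — 2 statements merged into one kernel-verified Lean document; each statement's English description precedes it below -/
import Mathlib

section
/- Let n ≥ 1, a ≥ 1 and b ∈ ℕ, and let x = (a, b, b, …, b) ∈ ℕ^n. Then the number of x-parking functions equals a·(a + n·b)^{n−1}. -/
open Finset

-- running minimum machinery over ℤ-valued path with down-steps ≥ -1
section RecCount

variable (Φ : ℕ → ℤ)

/-- strict lower record -/
def IsRec (T : ℕ) : Prop := ∀ t < T, Φ T < Φ t

instance (T : ℕ) : Decidable (IsRec Φ T) := by unfold IsRec; infer_instance

noncomputable def Mn (T : ℕ) : ℤ := ((Finset.range (T+1)).image Φ).min' (by simp)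

lemma Mn_le {t T : ℕ} (h : t ≤ T) : Mn Φ T ≤ Φ t := by
  apply Finset.min'_le
  exact Finset.mem_image_of_mem _ (by simp; omega)

lemma le_Mn {T : ℕ} (v : ℤ) (h : ∀ t ≤ T, v ≤ Φ t) : v ≤ Mn Φ T := by
  apply Finset.le_min'
  intro y hy
  simp only [Finset.mem_image, Finset.mem_range] at hy
  obtain ⟨t, ht, rfl⟩ := hy
  exact h t (by omega)

lemma Mn_succ (T : ℕ) : Mn Φ (T+1) = min (Mn Φ T) (Φ (T+1)) := by
  apply le_antisymm
  · apply le_min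
    · exact le_Mn Φ _ (fun t ht => Mn_le Φ (by omega))
    · exact Mn_le Φ (le_refl _)
  · apply le_Mn
    intro t ht
    rcases Nat.lt_or_ge t (T+1) with h | h
    · exact le_trans (min_le_left _ _) (Mn_le Φ (by omega))
    · have : t = T + 1 := by omega
      subst this
      exact min_le_right _ _

lemma rec_iff (T : ℕ) : IsRec Φ (T+1) ↔ Φ (T+1) < Mn Φ T := by
  constructor
  · intro h
    obtain ⟨y, hy, hmin⟩ := Finset.mem_image.mp (Finset.min'_mem ((Finset.range (T+1)).image Φ) (by simp))
    simp only [Finset.mem_range] at hy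
    rw [show Mn Φ T = Φ y from hmin.symm]
    exact h y (by omega)
  · intro h t ht
    calc Φ (T+1) < Mn Φ T := h
    _ ≤ Φ t := Mn_le Φ (by omega)

variable (hstep : ∀ T, Φ T - 1 ≤ Φ (T+1))

include hstep in
lemma Mn_succ_drop (T : ℕ) :
    Mn Φ (T+1) = if IsRec Φ (T+1) then Mn Φ T - 1 else Mn Φ T := by
  rw [Mn_succ]
  split_ifs with h
  · rw [rec_iff] at h
    have h2 : Mn Φ T - 1 ≤ Φ (T+1) := le_trans (by have := Mn_le Φ (le_refl T); omega) (hstep T)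
    omega
  · rw [rec_iff] at h
    omega

include hstep in
lemma rec_count (T0 k : ℕ) :
    ((Finset.Ico (T0+1) (T0+1+k)).filter (IsRec Φ)).card = (Mn Φ T0 - Mn Φ (T0+k)).toNat := by
  induction k with
  | zero => simp
  | succ k ih =>
    have hsplit : Finset.Ico (T0+1) (T0+1+(k+1)) = insert (T0+1+k) (Finset.Ico (T0+1) (T0+1+k)) := by
      ext s; simp only [Finset.mem_Ico, Finset.mem_insert]; omega
    rw [hsplit, Finset.filter_insert]
    have hdrop := Mn_succ_drop Φ hstep (T0+k)
    have hmono : Mn Φ (T0 + k) ≤ Mn Φ T0 := by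
      apply le_Mn; intro t ht; exact Mn_le Φ (by omega)
    split_ifs with h
    · rw [Finset.card_insert_of_notMem (by simp), ih]
      rw [show T0 + (k+1) = (T0+k)+1 by omega, hdrop, if_pos (by rwa [show T0+k+1 = T0+1+k by omega])]
      omega
    · rw [ih, show T0 + (k+1) = (T0+k)+1 by omega, hdrop,
        if_neg (by rwa [show T0+k+1 = T0+1+k by omega])]

end RecCount

section Core

variable (a b n : ℕ) (cnt : ℕ → ℕ)

def GoodU (u : ℕ) : Prop := ∀ j < n, cnt u + (j+1) ≤ cnt (u + (a + j*b))

instance (u : ℕ) : Decidable (GoodU a b n cnt u) := by unfold GoodU; infer_instance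

lemma core (ha : 1 ≤ a)
    (hmono : ∀ T, cnt T ≤ cnt (T+1))
    (hper : ∀ T, cnt (T + (a + n*b)) = cnt T + n) :
    ((Finset.range (a+n*b)).filter (GoodU a b n cnt)).card = a := by
  rcases Nat.eq_zero_or_pos b with hb | hb
  · subst hb
    have hall : ∀ u, GoodU a 0 n cnt u := by
      intro u j hj
      have := hper u
      simp only [Nat.mul_zero, Nat.add_zero] at this ⊢
      omega
    rw [Finset.filter_true_of_mem (fun u _ => hall u)]
    simp
  · set m := a + n * b with hm
    set Φ : ℕ → ℤ := fun T => (b : ℤ) * cnt T - T with hΦ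
    have hstep : ∀ T, Φ T - 1 ≤ Φ (T+1) := by
      intro T
      have h1 : (cnt T : ℤ) ≤ cnt (T+1) := by exact_mod_cast hmono T
      have h2 : (b:ℤ) * cnt T ≤ b * cnt (T+1) := by
        apply mul_le_mul_of_nonneg_left h1 (by positivity)
      simp only [hΦ]; push_cast; omega
    have hmulti : ∀ T d : ℕ, Φ T - d ≤ Φ (T + d) := by
      intro T d
      induction d with
      | zero => simp
      | succ d ih =>
        have := hstep (T + d)
        push_cast
        rw [show T + (d+1) = (T+d)+1 by omega]
        push_cast at ih
        omega
    have hper' : ∀ T, Φ (T + m) = Φ T - a := by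
      intro T
      simp only [hΦ, hper T]
      push_cast
      simp only [hm]
      push_cast
      ring
    -- Step A : GoodU ↔ window condition
    have stepA : ∀ u, GoodU a b n cnt u ↔ (∀ t, u < t → t < u + m → Φ u - a < Φ t) := by
      intro u
      constructor
      · intro hg t hut htm
        rcases Nat.lt_or_ge (t - u) a with hda | hda
        · have h2 := hmulti u (t - u)
          rw [show u + (t - u) = t by omega] at h2
          have h1 : ((t - u : ℕ) : ℤ) < a := by exact_mod_cast hda
          omega
        · set e := t - u - a with he
          have hebound : e < n * b := by omega
          set j := e / b with hj
          set r := e % b with hr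
          have hdm : b * j + r = e := Nat.div_add_mod e b
          have hrb : r < b := Nat.mod_lt _ hb
          have hjn : j < n := by
            have h1 : b * j < b * n := by rw [Nat.mul_comm n b] at hebound; omega
            exact Nat.lt_of_mul_lt_mul_left h1
          have hgj := hg j hjn
          have ht' : t = (u + (a + j*b)) + r := by
            rw [Nat.mul_comm j b]; omega
          have h2 := hmulti (u + (a + j*b)) r
          have h3 : (b:ℤ) * ((cnt u : ℤ) + (j+1)) ≤ (b:ℤ) * cnt (u + (a + j*b)) := by
            apply mul_le_mul_of_nonneg_left _ (by positivity)
            exact_mod_cast hgj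
          have h4 : Φ u + (b:ℤ) - a ≤ Φ (u + (a + j*b)) := by
            have hc : ((u + (a + j*b) : ℕ) : ℤ) = (u:ℤ) + a + (j:ℤ)*(b:ℤ) := by push_cast; ring
            simp only [hΦ, hc]
            nlinarith [h3]
          have hrb' : ((r:ℕ) : ℤ) < b := by exact_mod_cast hrb
          rw [ht']
          have h5 : Φ (u + (a + j*b)) - r ≤ Φ (u + (a + j*b) + r) := hmulti _ r
          omega
      · intro hg j hj
        have hjb : a + j * b < m := by
          have : j * b < n * b := Nat.mul_lt_mul_of_pos_right hj hb
          omega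
        have hgt := hg (u + (a + j*b)) (by omega) (by omega)
        have hb0 : (0:ℤ) < b := by exact_mod_cast hb
        have hc : ((u + (a + j*b) : ℕ) : ℤ) = (u:ℤ) + a + (j:ℤ)*(b:ℤ) := by push_cast; ring
        have h1 : (b:ℤ) * ((cnt u : ℤ) + j) < (b:ℤ) * cnt (u + (a + j*b)) := by
          simp only [hΦ, hc] at hgt
          nlinarith [hgt]
        have h2 : ((cnt u : ℤ) + j) < cnt (u + (a + j*b)) := (mul_lt_mul_iff_right₀ hb0).mp h1
        have h3 : cnt u + j < cnt (u + (a + j*b)) := by exact_mod_cast h2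
        omega
    -- Step B : window condition ↔ IsRec (u + m)
    have stepB : ∀ u, u < m → ((∀ t, u < t → t < u + m → Φ u - a < Φ t) ↔ IsRec Φ (u + m)) := by
      intro u hu
      constructor
      · intro hg t ht
        rcases Nat.lt_trichotomy t u with h | h | h
        · have h1 := hg (t + m) (by omega) (by omega)
          have h2 := hper' t
          have h3 := hper' u
          have ha' : (1:ℤ) ≤ a := by exact_mod_cast ha
          omega
        · subst h
          have := hper' t
          have ha' : (1:ℤ) ≤ a := by exact_mod_cast ha
          omega
        · have := hg t h ht
          have := hper' u
          omega
      · intro hrec t hut htm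
        have := hrec t (by omega)
        have := hper' u
        omega
    -- Step C : bijection u ↦ u + m
    have stepC : ((Finset.range m).filter (GoodU a b n cnt)).card
        = ((Finset.Ico m (m + m)).filter (IsRec Φ)).card := by
      apply Finset.card_bij (fun u _ => u + m)
      · intro u hu
        simp only [Finset.mem_filter, Finset.mem_range] at hu
        simp only [Finset.mem_filter, Finset.mem_Ico]
        refine ⟨by omega, ?_⟩
        rw [← stepB u hu.1, ← stepA u]
        exact hu.2
      · intro u1 h1 u2 h2 h
        omega
      · intro T hT
        simp only [Finset.mem_filter, Finset.mem_Ico] at hT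
        refine ⟨T - m, ?_, by omega⟩
        simp only [Finset.mem_filter, Finset.mem_range]
        refine ⟨by omega, ?_⟩
        rw [stepA, stepB _ (by omega)]
        rw [show T - m + m = T by omega]
        exact hT.2
    -- Step D+E : record count equals a
    have hm1 : 1 ≤ m := by omega
    have stepD : ((Finset.Ico m (m + m)).filter (IsRec Φ)).card
        = (Mn Φ (m-1) - Mn Φ ((m-1) + m)).toNat := by
      have h := rec_count Φ hstep (m-1) m
      rw [show (m-1)+1 = m by omega] at h
      exact h
    have stepE : Mn Φ ((m-1) + m) = Mn Φ (m-1) - a := by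
      apply le_antisymm
      · obtain ⟨y, hy, hmin⟩ := Finset.mem_image.mp
          (Finset.min'_mem ((Finset.range ((m-1)+1)).image Φ) (by simp))
        simp only [Finset.mem_range] at hy
        have h1 : Mn Φ ((m-1)+m) ≤ Φ (y + m) := Mn_le Φ (by omega)
        rw [hper' y] at h1
        have h2 : Mn Φ (m-1) = Φ y := by rw [Mn]; exact hmin.symm
        omega
      · apply le_Mn
        intro t ht
        rcases Nat.lt_or_ge t m with h | h
        · have := Mn_le Φ (show t ≤ m - 1 by omega)
          have ha' : (0:ℤ) ≤ a := by positivity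
          omega
        · have h1 := hper' (t - m)
          rw [show t - m + m = t by omega] at h1
          have := Mn_le Φ (show t - m ≤ m - 1 by omega)
          omega
    rw [stepC, stepD, stepE]
    omega

end Core

section Windows

lemma mod2 {m s : ℕ} (hm : 0 < m) (h : s < 2*m) : s % m = if s < m then s else s - m := by
  split_ifs with h1
  · exact Nat.mod_eq_of_lt h1
  · rw [Nat.mod_eq_sub_mod (by omega), Nat.mod_eq_of_lt (by omega)]

lemma window_card {m v u t : ℕ} (hm : 0 < m) (hv : v < m) (hu : u < m) (ht : t ≤ m) :
    ((Finset.Ico u (u+t)).filter fun s => s % m = v).card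
      = if (v + (m - u)) % m < t then 1 else 0 := by
  have key : ∀ s0, (u ≤ s0 ∧ s0 < u + m ∧ s0 % m = v) →
      ((v + (m - u)) % m = s0 - u) := by
    intro s0 ⟨h1, h2, h3⟩
    rw [mod2 hm (by omega)] at h3 ⊢
    split_ifs at h3 ⊢ <;> omega
  have huniq : ∀ s, (u ≤ s ∧ s < u + m) → (s % m = v ↔ s = (if u ≤ v then v else v + m)) := by
    intro s ⟨h1, h2⟩
    rw [mod2 hm (by omega)]
    split_ifs <;> omega
  set s0 := if u ≤ v then v else v + m with hs0
  have hs0r : u ≤ s0 ∧ s0 < u + m := by rw [hs0]; split_ifs <;> omega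
  have hc := key s0 ⟨hs0r.1, hs0r.2, (huniq s0 hs0r).mpr rfl⟩
  have hset : ((Finset.Ico u (u+t)).filter fun s => s % m = v)
      = if s0 - u < t then {s0} else ∅ := by
    ext s
    simp only [Finset.mem_filter, Finset.mem_Ico]
    constructor
    · rintro ⟨⟨h1, h2⟩, h3⟩
      have := (huniq s ⟨h1, by omega⟩).mp h3
      subst this
      rw [if_pos (by omega)]
      exact Finset.mem_singleton_self _
    · intro hs
      split_ifs at hs with h4
      · simp only [Finset.mem_singleton] at hs
        subst hs
        exact ⟨⟨by omega, by omega⟩, (huniq s0 hs0r).mpr rfl⟩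
      · simp at hs
  rw [hset, hc]
  split_ifs <;> simp

lemma sum_x (a b j : ℕ) :
    ∑ k ∈ Finset.range (j+1), (if k = 0 then a else b) = a + j*b := by
  induction j with
  | zero => simp
  | succ j ih =>
    rw [Finset.sum_range_succ, ih, if_neg (by omega)]
    ring

end Windows

section Count

variable {n m : ℕ} [NeZero m]

def wf (β : Fin n → ZMod m) (s : ℕ) : ℕ :=
  (Finset.univ.filter fun i => (β i).val = s % m).card

def cntf (β : Fin n → ZMod m) (T : ℕ) : ℕ := ∑ s ∈ Finset.range T, wf β s

lemma wf_per (β : Fin n → ZMod m) (s : ℕ) : wf β (s + m) = wf β s := by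
  unfold wf
  rw [Nat.add_mod_right]

lemma cntf_base (β : Fin n → ZMod m) : cntf β m = n := by
  have h0 : 0 < m := Nat.pos_of_ne_zero (NeZero.ne m)
  unfold cntf wf
  have h1 : ∀ s ∈ Finset.range m,
      (Finset.univ.filter fun i => (β i).val = s % m).card
        = (Finset.univ.filter fun i => (β i).val = s).card := by
    intro s hs
    rw [Nat.mod_eq_of_lt (Finset.mem_range.mp hs)]
  rw [Finset.sum_congr rfl h1]
  have := Finset.card_eq_sum_card_fiberwise
    (f := fun i : Fin n => (β i).val) (s := Finset.univ) (t := Finset.range m)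
    (fun i _ => Finset.mem_range.mpr ((β i).val_lt))
  simpa using this.symm

lemma cntf_mono (β : Fin n → ZMod m) (T : ℕ) : cntf β T ≤ cntf β (T+1) := by
  unfold cntf
  rw [Finset.sum_range_succ]
  omega

lemma cntf_per (β : Fin n → ZMod m) (T : ℕ) : cntf β (T + m) = cntf β T + n := by
  induction T with
  | zero =>
    have h0 : cntf β 0 = 0 := by unfold cntf; simp
    have h := cntf_base β
    rw [Nat.zero_add]
    omega
  | succ T ih =>
    have e1 : cntf β (T + 1 + m) = cntf β (T + m) + wf β (T + m) := by
      rw [show T + 1 + m = (T + m) + 1 by omega]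
      unfold cntf
      rw [Finset.sum_range_succ]
    have e2 : cntf β (T + 1) = cntf β T + wf β T := by
      unfold cntf; rw [Finset.sum_range_succ]
    rw [e1, wf_per, ih, e2]
    omega

lemma cntf_split (β : Fin n → ZMod m) (u t : ℕ) :
    cntf β (u + t) = cntf β u + ∑ s ∈ Finset.Ico u (u+t), wf β s := by
  unfold cntf
  simp only [Finset.range_eq_Ico]
  exact (Finset.sum_Ico_consecutive _ (Nat.zero_le u) (Nat.le_add_right u t)).symm

lemma shift_count (β : Fin n → ZMod m) (u t : ℕ) (hu : u < m) (ht : t ≤ m) :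
    (Finset.univ.filter fun i => ((β i) - (u : ZMod m)).val < t).card
      = ∑ s ∈ Finset.Ico u (u+t), wf β s := by
  have h0 : 0 < m := Nat.pos_of_ne_zero (NeZero.ne m)
  have hval : ∀ i, ((β i) - (u : ZMod m)).val = ((β i).val + (m - u)) % m := by
    intro i
    have h1 : ((β i) - (u : ZMod m)) = (((β i).val + (m - u) : ℕ) : ZMod m) := by
      rw [Nat.cast_add, ZMod.natCast_val, ZMod.cast_id, Nat.cast_sub (le_of_lt hu), ZMod.natCast_self,
        zero_sub, sub_eq_add_neg]
    rw [h1, ZMod.val_natCast]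
  calc (Finset.univ.filter fun i => ((β i) - (u : ZMod m)).val < t).card
      = ∑ i : Fin n, if ((β i).val + (m - u)) % m < t then 1 else 0 := by
        rw [Finset.card_filter]
        exact Finset.sum_congr rfl (fun i _ => by rw [hval i])
    _ = ∑ i : Fin n, ((Finset.Ico u (u+t)).filter fun s => s % m = (β i).val).card := by
        refine Finset.sum_congr rfl (fun i _ => ?_)
        rw [window_card h0 ((β i).val_lt) hu ht]
    _ = ∑ i : Fin n, ∑ s ∈ Finset.Ico u (u+t), if s % m = (β i).val then 1 else 0 := by
        exact Finset.sum_congr rfl (fun i _ => Finset.card_filter _ _)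
    _ = ∑ s ∈ Finset.Ico u (u+t), ∑ i : Fin n, if s % m = (β i).val then 1 else 0 :=
        Finset.sum_comm
    _ = ∑ s ∈ Finset.Ico u (u+t), wf β s := by
        refine Finset.sum_congr rfl (fun s _ => ?_)
        unfold wf
        rw [Finset.card_filter]
        exact Finset.sum_congr rfl (fun i _ => by simp [eq_comm])

end Count

/-- `α` is an `x`-parking function of length `n` (`x` given 0-based: `x k` is `x_{k+1}`). -/
def IsVPF (n : ℕ) (x : ℕ → ℕ) (α : Fin n → ℕ) : Prop :=
  ∀ j : Fin n, (j : ℕ) + 1 ≤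
    (Finset.univ.filter fun i => α i < ∑ k ∈ Finset.range ((j : ℕ) + 1), x k).card

instance (n : ℕ) (x : ℕ → ℕ) (α : Fin n → ℕ) : Decidable (IsVPF n x α) := by
  unfold IsVPF; infer_instance

lemma pow_split (n M : ℕ) (hn : 1 ≤ n) : M^n = M * M^(n-1) := by
  conv_lhs => rw [show n = 1 + (n-1) by omega]
  rw [pow_add, pow_one]

section Bridge

variable {n m : ℕ} [NeZero m]

lemma vpf_iff_good (a b : ℕ) (hm : m = a + n*b) (β : Fin n → ZMod m) (u : ℕ) (hu : u < m) :
    IsVPF n (fun k => if k = 0 then a else b) (fun i => ((β i) - (u : ZMod m)).val)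
      ↔ GoodU a b n (cntf β) u := by
  have hle : ∀ j, j < n → a + j*b ≤ m := by
    intro j hj
    have : j*b ≤ n*b := Nat.mul_le_mul_right b (le_of_lt hj)
    omega
  unfold IsVPF GoodU
  constructor
  · intro h j hj
    have hj' := h ⟨j, hj⟩
    simp only [show ((⟨j, hj⟩ : Fin n) : ℕ) = j from rfl] at hj'
    rw [sum_x, shift_count β u (a + j*b) hu (hle j hj)] at hj'
    rw [cntf_split β u (a + j*b)]
    omega
  · intro h j
    have hj := h (j : ℕ) j.isLt
    rw [sum_x, shift_count β u (a + (j:ℕ)*b) hu (hle _ j.isLt)]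
    rw [cntf_split β u (a + (j:ℕ)*b)] at hj
    omega

lemma per_beta (a b : ℕ) (ha : 1 ≤ a) (hm : m = a + n*b) (β : Fin n → ZMod m) :
    ((Finset.univ : Finset (ZMod m)).filter fun c =>
      IsVPF n (fun k => if k = 0 then a else b) (fun i => ((β i) + c).val)).card = a := by
  have hcore := core a b n (cntf β) ha (cntf_mono β)
    (fun T => by rw [← hm]; exact cntf_per β T)
  rw [← hm] at hcore
  have hbij : ((Finset.univ : Finset (ZMod m)).filter fun c =>
      IsVPF n (fun k => if k = 0 then a else b) (fun i => ((β i) + c).val)).card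
      = ((Finset.range m).filter (GoodU a b n (cntf β))).card := by
    apply Finset.card_bij' (fun c _ => (-c).val) (fun u _ => -((u : ℕ) : ZMod m))
    · intro c hc
      simp only [Finset.mem_filter, Finset.mem_univ, true_and] at hc
      simp only [Finset.mem_filter, Finset.mem_range]
      refine ⟨(-c).val_lt, ?_⟩
      rw [← vpf_iff_good a b hm β _ ((-c).val_lt)]
      have he : (fun i => ((β i) - ((((-c).val) : ℕ) : ZMod m)).val)
          = fun i => ((β i) + c).val := by
        funext i
        rw [ZMod.natCast_val, ZMod.cast_id, sub_neg_eq_add]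
      rw [he]
      exact hc
    · intro u hu
      simp only [Finset.mem_filter, Finset.mem_range] at hu
      simp only [Finset.mem_filter, Finset.mem_univ, true_and]
      have he : (fun i => ((β i) + (-((u:ℕ) : ZMod m))).val)
          = fun i => ((β i) - ((u:ℕ) : ZMod m)).val := by
        funext i
        rw [← sub_eq_add_neg]
      rw [he, vpf_iff_good a b hm β u hu.1]
      exact hu.2
    · intro c hc
      rw [ZMod.natCast_val, ZMod.cast_id, neg_neg]
    · intro u hu
      simp only [Finset.mem_filter, Finset.mem_range] at hu
      rw [neg_neg, ZMod.val_natCast, Nat.mod_eq_of_lt hu.1]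
  rw [hbij, hcore]

lemma total_count (a b : ℕ) (ha : 1 ≤ a) (hm : m = a + n*b) :
    m * ((Finset.univ : Finset (Fin n → ZMod m)).filter fun γ =>
      IsVPF n (fun k => if k = 0 then a else b) (fun i => (γ i).val)).card = a * m^n := by
  set x : ℕ → ℕ := fun k => if k = 0 then a else b with hx
  set K := ((Finset.univ : Finset (Fin n → ZMod m)).filter fun γ =>
    IsVPF n x (fun i => (γ i).val)).card with hK
  have hfix : ∀ c : ZMod m,
      ((Finset.univ : Finset (Fin n → ZMod m)).filter fun β =>
        IsVPF n x (fun i => ((β i) + c).val)).card = K := by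
    intro c
    rw [hK]
    apply Finset.card_bij (fun β _ => fun i => β i + c)
    · intro β hβ
      simp only [Finset.mem_filter, Finset.mem_univ, true_and] at hβ ⊢
      exact hβ
    · intro β1 h1 β2 h2 h
      funext i
      have := congrFun h i
      simpa using this
    · intro γ hγ
      simp only [Finset.mem_filter, Finset.mem_univ, true_and] at hγ
      refine ⟨fun i => γ i - c, ?_, by funext i; simp⟩
      simp only [Finset.mem_filter, Finset.mem_univ, true_and]
      have he : (fun i => ((γ i - c) + c).val) = fun i => (γ i).val := by
        funext i; rw [sub_add_cancel]
      rw [he]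
      exact hγ
  have hswap : ∑ c : ZMod m, ((Finset.univ : Finset (Fin n → ZMod m)).filter fun β =>
        IsVPF n x (fun i => ((β i) + c).val)).card
      = ∑ β : Fin n → ZMod m, ((Finset.univ : Finset (ZMod m)).filter fun c =>
        IsVPF n x (fun i => ((β i) + c).val)).card := by
    simp only [Finset.card_filter]
    exact Finset.sum_comm
  have hcardU : Fintype.card (Fin n → ZMod m) = m^n := by
    rw [Fintype.card_fun, ZMod.card, Fintype.card_fin]
  calc m * K = ∑ _c : ZMod m, K := by
        rw [Finset.sum_const, Finset.card_univ, ZMod.card, smul_eq_mul]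
    _ = ∑ c : ZMod m, ((Finset.univ : Finset (Fin n → ZMod m)).filter fun β =>
          IsVPF n x (fun i => ((β i) + c).val)).card := by
        exact Finset.sum_congr rfl (fun c _ => (hfix c).symm)
    _ = ∑ β : Fin n → ZMod m, ((Finset.univ : Finset (ZMod m)).filter fun c =>
          IsVPF n x (fun i => ((β i) + c).val)).card := hswap
    _ = ∑ _β : Fin n → ZMod m, a := by
        exact Finset.sum_congr rfl (fun β _ => per_beta a b ha hm β)
    _ = a * m^n := by
        rw [Finset.sum_const, Finset.card_univ, hcardU, smul_eq_mul, Nat.mul_comm]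

end Bridge

/-- The number of `(a,b,b,…,b)`-parking functions is `a(a+nb)^{n−1}`. -/
theorem stmt10 (n : ℕ) (hn : 1 ≤ n) (a b : ℕ) (ha : 1 ≤ a) :
    Set.ncard {α : Fin n → ℕ | IsVPF n (fun k => if k = 0 then a else b) α} =
      a * (a + n * b) ^ (n - 1) := by
  set x : ℕ → ℕ := fun k => if k = 0 then a else b with hx
  set m := a + n * b with hm
  have hm0 : 0 < m := by omega
  haveI : NeZero m := ⟨by omega⟩
  have hbound : ∀ α : Fin n → ℕ, IsVPF n x α → ∀ i, α i < m := by
    intro α hα i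
    have hj := hα ⟨n-1, by omega⟩
    simp only [show ((⟨n-1, by omega⟩ : Fin n) : ℕ) = n-1 from rfl] at hj
    rw [sum_x] at hj
    have huniv : (Finset.univ.filter fun i => α i < a + (n-1)*b) = Finset.univ := by
      apply Finset.eq_univ_of_card
      have h1 := Finset.card_le_univ (Finset.univ.filter fun i => α i < a + (n-1)*b)
      rw [Fintype.card_fin] at h1 ⊢
      omega
    have : i ∈ Finset.univ.filter fun i => α i < a + (n-1)*b := by
      rw [huniv]; exact Finset.mem_univ i
    have h2 := (Finset.mem_filter.mp this).2
    have h3 : (n-1)*b ≤ n*b := Nat.mul_le_mul_right b (by omega)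
    omega
  have himg : {α : Fin n → ℕ | IsVPF n x α}
      = (fun (γ : Fin n → ZMod m) => fun i => (γ i).val) ''
        {γ : Fin n → ZMod m | IsVPF n x (fun i => (γ i).val)} := by
    ext α
    simp only [Set.mem_setOf_eq, Set.mem_image]
    constructor
    · intro h
      have he : (fun i => (((α i : ℕ) : ZMod m)).val) = α := by
        funext i
        rw [ZMod.val_natCast, Nat.mod_eq_of_lt (hbound α h i)]
      refine ⟨fun i => ((α i : ℕ) : ZMod m), ?_, he⟩
      show IsVPF n x (fun i => (((α i : ℕ) : ZMod m)).val)
      rw [he]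
      exact h
    · rintro ⟨γ, hγ, rfl⟩
      exact hγ
  rw [himg]
  rw [Set.ncard_image_of_injOn (by
    intro γ1 _ γ2 _ h
    funext i
    exact ZMod.val_injective m (congrFun h i))]
  have hsetf : {γ : Fin n → ZMod m | IsVPF n x (fun i => (γ i).val)}
      = ↑(Finset.univ.filter fun γ : Fin n → ZMod m => IsVPF n x (fun i => (γ i).val)) := by
    ext γ
    simp
  rw [hsetf, Set.ncard_coe_finset]
  have htot := total_count a b ha hm
  apply Nat.eq_of_mul_eq_mul_left hm0
  rw [htot, pow_split n m hn]
  ring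
end

section
/- Let a, b ≥ 1 and m ≥ 2, and let y(a,b,m) ∈ ℕ^{bm−1} be the vector whose j-th entry is a if j ≡ 1 (mod b) and 0 otherwise (i.e. y = (a,0,…,0,a,0,…,0,…,a,0,…,0) with m blocks, the last block having b−1 zeros). Then the number of y(a,b,m)-parking functions equals a^{bm−1} · m^{bm−2}. -/
open Finset

namespace PF19

variable (m n b : ℕ)

def cnt (u : Fin n → ZMod m) (t : ZMod m) : ℕ :=
  (univ.filter fun i => u i = t).card

def T (u : Fin n → ZMod m) (j : ℕ) : ℤ :=
  ∑ t ∈ range j, ((b : ℤ) - cnt m n u (t : ℕ))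

def Good (u : Fin n → ZMod m) : Prop := ∀ j < m, T m n b u j ≤ 0

variable {m n b}

lemma T_eq (u : Fin n → ZMod m) (j : ℕ) :
    T m n b u j = (j : ℤ) * b - ∑ t ∈ range j, (cnt m n u (t : ℕ) : ℤ) := by
  simp [T, Finset.sum_sub_distrib, mul_comm]

lemma sum_cnt [NeZero m] (u : Fin n → ZMod m) : ∑ t : ZMod m, cnt m n u t = n := by
  classical
  have := Finset.card_eq_sum_card_fiberwise (f := u) (s := univ) (t := univ)
    (fun x _ => mem_univ _)
  simpa [cnt] using this.symm

lemma sum_range_cnt [NeZero m] (u : Fin n → ZMod m) :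
    ∑ t ∈ range m, cnt m n u (t : ℕ) = n := by
  conv_rhs => rw [← sum_cnt u]
  refine Finset.sum_nbij' (fun t => ((t : ℕ) : ZMod m)) (fun s => s.val) ?_ ?_ ?_ ?_ ?_
  · intro t _; exact mem_univ _
  · intro s _; exact mem_range.mpr (ZMod.val_lt s)
  · intro t ht; exact ZMod.val_cast_of_lt (mem_range.mp ht)
  · intro s _; exact ZMod.natCast_rightInverse s
  · intro t _; rfl

lemma T_add [NeZero m] (hnm : n + 1 = b * m) (u : Fin n → ZMod m) (j : ℕ) :
    T m n b u (j + m) = T m n b u j + 1 := by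
  induction j with
  | zero =>
      have h0 : T m n b u 0 = 0 := by simp [T]
      have : T m n b u (0 + m) = m * b - n := by
        rw [T_eq]
        have h := sum_range_cnt u
        have h2 : ∑ t ∈ range m, (cnt m n u (t : ℕ) : ℤ) = (n : ℤ) := by
          exact_mod_cast congrArg (Nat.cast (R := ℤ)) h
        rw [zero_add, h2]
      rw [this, h0]
      have : (n : ℤ) + 1 = b * m := by exact_mod_cast hnm
      linarith
  | succ j ih =>
      have h1 : T m n b u (j + 1 + m) = T m n b u (j + m) + ((b : ℤ) - cnt m n u ((j + m : ℕ))) := by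
        have : j + 1 + m = (j + m) + 1 := by omega
        rw [this, T, Finset.sum_range_succ, ← T]
      have h2 : T m n b u (j + 1) = T m n b u j + ((b : ℤ) - cnt m n u ((j : ℕ))) := by
        rw [T, Finset.sum_range_succ, ← T]
      have h3 : ((j + m : ℕ) : ZMod m) = ((j : ℕ) : ZMod m) := by
        push_cast [ZMod.natCast_self]; ring
      rw [h1, h3, ih, h2]; ring


lemma cnt_shift (u : Fin n → ZMod m) (c t : ZMod m) :
    cnt m n (fun i => u i + c) t = cnt m n u (t - c) := by
  unfold cnt
  congr 1
  apply Finset.filter_congr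
  intro i _
  simp only [eq_sub_iff_add_eq]

lemma natCast_sub_val [NeZero m] (c : ZMod m) : ((m - c.val : ℕ) : ZMod m) = -c := by
  have hv : c.val ≤ m := le_of_lt (ZMod.val_lt c)
  have : ((m - c.val : ℕ) : ZMod m) + c = 0 := by
    have : ((m - c.val : ℕ) : ZMod m) + ((c.val : ℕ) : ZMod m) = ((m : ℕ) : ZMod m) := by
      rw [← Nat.cast_add]
      congr 1
      omega
    rw [ZMod.natCast_rightInverse c] at this
    rw [this, ZMod.natCast_self]
  linear_combination this

lemma T_shift [NeZero m] (u : Fin n → ZMod m) (c : ZMod m) (j : ℕ) :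
    T m n b (fun i => u i + c) j = T m n b u ((m - c.val) + j) - T m n b u (m - c.val) := by
  set p := m - c.val with hp
  have key : ∀ t : ℕ, ((t : ℕ) : ZMod m) - c = ((p + t : ℕ) : ZMod m) := by
    intro t
    push_cast
    rw [natCast_sub_val c]
    ring
  rw [T, T, T, Finset.sum_range_add]
  simp only [cnt_shift, key]
  ring

/-- Window maximum predicate. -/
def WMax (u : Fin n → ZMod m) (p : ℕ) : Prop :=
  ∀ j < m, T m n b u (p + j) ≤ T m n b u p

lemma good_shift_iff [NeZero m] (u : Fin n → ZMod m) (c : ZMod m) :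
    Good m n b (fun i => u i + c) ↔ WMax (b := b) u (m - c.val) := by
  unfold Good WMax
  constructor
  · intro h j hj
    have := h j hj
    rw [T_shift] at this
    linarith
  · intro h j hj
    rw [T_shift]
    have := h j hj
    linarith

lemma wmax_exists [NeZero m] (hnm : n + 1 = b * m) (u : Fin n → ZMod m) :
    ∃ p ∈ Icc 1 m, WMax (b := b) u p := by
  have hm : 1 ≤ m := Nat.one_le_iff_ne_zero.mpr (NeZero.ne m)
  obtain ⟨x, hx, hmaxx⟩ := Finset.exists_max_image (Icc 1 m) (T m n b u)
    ⟨1, by simp [hm]⟩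
  set MT := T m n b u x with hMT
  set s := (Icc 1 m).filter (fun j => MT ≤ T m n b u j) with hs
  have hsne : s.Nonempty := ⟨x, by simp [hs, hx, hMT]⟩
  set p := s.min' hsne with hpd
  have hps : p ∈ s := Finset.min'_mem s hsne
  rw [hs, mem_filter] at hps
  obtain ⟨hpIcc, hple⟩ := hps
  have hp1 : 1 ≤ p := (mem_Icc.mp hpIcc).1
  have hpm : p ≤ m := (mem_Icc.mp hpIcc).2
  have hpmax : ∀ k ∈ Icc 1 m, T m n b u k ≤ T m n b u p :=
    fun k hk => le_trans (hmaxx k hk) hple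
  refine ⟨p, hpIcc, ?_⟩
  intro j hj
  rcases le_or_gt (p + j) m with hle | hlt
  · exact hpmax (p + j) (mem_Icc.mpr ⟨by omega, hle⟩)
  · set k := p + j - m with hk
    have hkm : p + j = k + m := by omega
    have hk1 : 1 ≤ k := by omega
    have hkp : k < p := by omega
    have hkIcc : k ∈ Icc 1 m := mem_Icc.mpr ⟨hk1, by omega⟩
    have hTk : T m n b u k ≤ T m n b u p := hpmax k hkIcc
    have hne : T m n b u k ≠ T m n b u p := by
      intro heq
      have hkmem : k ∈ s := by
        rw [hs, mem_filter]
        refine ⟨hkIcc, ?_⟩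
        rw [heq]
        exact hple
      have := Finset.min'_le s k hkmem
      omega
    have hTadd : T m n b u (k + m) = T m n b u k + 1 := T_add hnm u k
    rw [hkm, hTadd]
    omega

lemma wmax_unique [NeZero m] (hnm : n + 1 = b * m) (u : Fin n → ZMod m)
    {p q : ℕ} (hp : p ∈ Icc 1 m) (hq : q ∈ Icc 1 m)
    (Wp : WMax (b := b) u p) (Wq : WMax (b := b) u q) : p = q := by
  rw [mem_Icc] at hp hq
  by_contra hne
  -- wlog p < q
  suffices H : ∀ p q : ℕ, 1 ≤ p → p ≤ m → 1 ≤ q → q ≤ m → p < q →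
      WMax (b := b) u p → WMax (b := b) u q → False by
    rcases Nat.lt_or_ge p q with h | h
    · exact H p q hp.1 hp.2 hq.1 hq.2 h Wp Wq
    · exact H q p hq.1 hq.2 hp.1 hp.2 (by omega) Wq Wp
  clear hp hq Wp Wq hne
  intro p q hp1 hpm hq1 hqm hlt Wp Wq
  have h1 : T m n b u q ≤ T m n b u p := by
    have := Wp (q - p) (by omega)
    rwa [show p + (q - p) = q by omega] at this
  have h2 : T m n b u (p + m) ≤ T m n b u q := by
    have := Wq (p + m - q) (by omega)
    rwa [show q + (p + m - q) = p + m by omega] at this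
  have h3 : T m n b u (p + m) = T m n b u p + 1 := T_add hnm u p
  omega

lemma shift_existsUnique [NeZero m] (hnm : n + 1 = b * m) (v : Fin n → ZMod m) :
    ∃! c : ZMod m, Good m n b (fun i => v i + c) := by
  have hm : 1 ≤ m := Nat.one_le_iff_ne_zero.mpr (NeZero.ne m)
  obtain ⟨p, hpIcc, hW⟩ := wmax_exists hnm v
  rw [mem_Icc] at hpIcc
  refine ⟨((m - p : ℕ) : ZMod m), ?_, ?_⟩
  · show Good m n b fun i => v i + ((m - p : ℕ) : ZMod m)
    rw [good_shift_iff]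
    have hval : (((m - p : ℕ) : ZMod m)).val = m - p :=
      ZMod.val_cast_of_lt (by omega)
    rw [hval, show m - (m - p) = p by omega]
    exact hW
  · intro c hc
    rw [good_shift_iff] at hc
    have hcv : c.val < m := ZMod.val_lt c
    have := wmax_unique hnm v (mem_Icc.mpr ⟨by omega, by omega⟩)
      (mem_Icc.mpr ⟨by omega, by omega⟩) hc hW
    have hcval : c.val = m - p := by omega
    have hval : (((m - p : ℕ) : ZMod m)).val = m - p :=
      ZMod.val_cast_of_lt (by omega)
    apply ZMod.val_injective
    rw [hval, hcval]

lemma card_good [NeZero m] (hnm : n + 1 = b * m) :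
    Nat.card {u : Fin n → ZMod m // Good m n b u} * m = m ^ n := by
  classical
  have hbij : Function.Bijective
      (fun x : {u : Fin n → ZMod m // Good m n b u} × ZMod m =>
        (fun i => x.1.1 i + x.2 : Fin n → ZMod m)) := by
    constructor
    · rintro ⟨⟨u, hu⟩, c⟩ ⟨⟨u', hu'⟩, c'⟩ h
      simp only at h
      set v : Fin n → ZMod m := fun i => u i + c with hv
      have e1 : (fun i => v i + (-c)) = u := by funext i; simp [hv]
      have e2 : (fun i => v i + (-c')) = u' := by
        funext i
        have hi : u i + c = u' i + c' := congrFun h i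
        show u i + c + -c' = u' i
        linear_combination hi
      have hg1 : Good m n b (fun i => v i + (-c)) := e1.symm ▸ hu
      have hg2 : Good m n b (fun i => v i + (-c')) := e2.symm ▸ hu'
      obtain ⟨c₀, _, huniq⟩ := shift_existsUnique hnm v
      have hcc' : (-c : ZMod m) = -c' := by
        rw [huniq _ hg1, huniq _ hg2]
      have hcc : c = c' := by linear_combination -hcc'
      subst hcc
      have huu : u = u' := by rw [← e1, ← e2]
      simp [huu]
    · intro v
      obtain ⟨c, hc, _⟩ := shift_existsUnique hnm v
      refine ⟨⟨⟨fun i => v i + c, hc⟩, -c⟩, ?_⟩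
      funext i
      simp
  have := Nat.card_eq_of_bijective _ hbij
  rw [Nat.card_prod, Nat.card_zmod] at this
  rw [this, Nat.card_fun, Nat.card_zmod, Nat.card_eq_fintype_card, Fintype.card_fin]


lemma count_sum [NeZero m] (u : Fin n → ZMod m) :
    ∀ j, j ≤ m → ∑ t ∈ range j, cnt m n u (t : ℕ) =
      ((univ : Finset (Fin n)).filter fun i => (u i).val < j).card := by
  intro j
  induction j with
  | zero => simp
  | succ j ih =>
    intro hj
    rw [Finset.sum_range_succ, ih (by omega)]
    have hcnt : cnt m n u ((j : ℕ) : ZMod m) =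
        ((univ : Finset (Fin n)).filter fun i => (u i).val = j).card := by
      unfold cnt
      congr 1
      apply filter_congr
      intro i _
      constructor
      · intro h; rw [h]; exact ZMod.val_cast_of_lt (by omega)
      · intro h; rw [← h]; exact (ZMod.natCast_rightInverse (u i)).symm
    rw [hcnt]
    have hsplit : ((univ : Finset (Fin n)).filter fun i => (u i).val < j + 1) =
        ((univ : Finset (Fin n)).filter fun i => (u i).val < j) ∪
        ((univ : Finset (Fin n)).filter fun i => (u i).val = j) := by
      ext i
      simp only [mem_filter, mem_union, mem_univ, true_and]
      omega
    rw [hsplit, Finset.card_union_of_disjoint]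
    rw [Finset.disjoint_left]
    intro i hi1 hi2
    simp only [mem_filter, mem_univ, true_and] at hi1 hi2
    omega

lemma good_iff [NeZero m] (hb : 1 ≤ b) (hnm : n + 1 = b * m) (u : Fin n → ZMod m) :
    Good m n b u ↔
      ∀ jv < n, jv + 1 ≤
        ((univ : Finset (Fin n)).filter fun i => (u i).val < jv / b + 1).card := by
  constructor
  · intro h jv hjv
    rcases lt_or_ge (jv / b + 1) m with hj | hj
    · have hT := h (jv / b + 1) hj
      rw [T_eq, sub_nonpos, ← Nat.cast_sum, count_sum u _ (by omega)] at hT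
      have hT' : (jv / b + 1) * b ≤
          ((univ : Finset (Fin n)).filter fun i => (u i).val < jv / b + 1).card := by
        exact_mod_cast hT
      have hkey : jv + 1 ≤ (jv / b + 1) * b := by
        have h1 := Nat.div_add_mod jv b
        have h2 : jv % b < b := Nat.mod_lt jv (by omega)
        calc jv + 1 = b * (jv / b) + jv % b + 1 := by omega
          _ ≤ b * (jv / b) + b := by omega
          _ = (jv / b + 1) * b := by ring
      omega
    · have hall : ((univ : Finset (Fin n)).filter fun i => (u i).val < jv / b + 1) =
          univ := by
        apply filter_true_of_mem
        intro i _
        exact lt_of_lt_of_le (ZMod.val_lt (u i)) hj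
      rw [hall, card_univ, Fintype.card_fin]
      omega
  · intro h j hj
    rcases Nat.eq_zero_or_pos j with rfl | hj1
    · simp [T]
    · have hcomm : b * m = m * b := mul_comm b m
      have hmul : j * b ≤ (m - 1) * b := Nat.mul_le_mul_right b (by omega)
      have hsub : (m - 1) * b = m * b - b := by rw [Nat.sub_mul, one_mul]
      have hjb1 : 1 ≤ j * b := Nat.mul_pos hj1 (by omega)
      have hjvlt : j * b - 1 < n := by omega
      have := h (j * b - 1) hjvlt
      have hdiv : (j * b - 1) / b = j - 1 := by
        have hjb : j * b = b * (j - 1) + (b - 1) + 1 := by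
          have h1 : b * (j - 1) + b = b * j := by
            rw [← Nat.mul_succ]
            congr 1
            omega
          have h2 : b * j = j * b := mul_comm b j
          omega
        have heq : j * b - 1 = (b - 1) + b * (j - 1) := by omega
        rw [heq, Nat.add_mul_div_left _ _ (show 0 < b by omega),
          Nat.div_eq_of_lt (by omega), Nat.zero_add]
      rw [hdiv, show j - 1 + 1 = j by omega] at this
      rw [T_eq, sub_nonpos, ← Nat.cast_sum, count_sum u j (le_of_lt hj)]
      have hfin : j * b ≤
          ((univ : Finset (Fin n)).filter fun i => (u i).val < j).card := by omega
      exact_mod_cast hfin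

lemma sum_x (a b jv : ℕ) (hb : 1 ≤ b) :
    ∑ k ∈ range (jv + 1), (if k % b = 0 then a else 0) = a * (jv / b + 1) := by
  induction jv with
  | zero => simp [Nat.zero_mod]
  | succ jv ih =>
    rw [Finset.sum_range_succ, ih, Nat.succ_div]
    have hiff : (jv + 1) % b = 0 ↔ b ∣ jv + 1 := Nat.dvd_iff_mod_eq_zero.symm
    by_cases hd : b ∣ jv + 1
    · rw [if_pos (hiff.mpr hd), if_pos hd]
      ring
    · rw [if_neg (fun hc => hd (hiff.mp hc)), if_neg hd]
      ring

lemma isVPF_iff {a b m n : ℕ} (hb : 1 ≤ b) (hnm : n + 1 = b * m) (α : Fin n → ℕ) :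
    IsVPF n (fun k => if k % b = 0 then a else 0) α ↔
      ∀ jv < n, jv + 1 ≤
        ((univ : Finset (Fin n)).filter fun i => α i < a * (jv / b + 1)).card := by
  unfold IsVPF
  constructor
  · intro h jv hjv
    have := h ⟨jv, hjv⟩
    rwa [sum_x a b jv hb] at this
  · intro h j
    have := h (j : ℕ) j.isLt
    rwa [← sum_x a b (j : ℕ) hb] at this

lemma div_bridge {a v r j : ℕ} (ha : 0 < a) (hr : r < a) : a * v + r < a * j ↔ v < j := by
  constructor
  · intro h
    by_contra hc
    push_neg at hc
    have h2 : a * j ≤ a * v := Nat.mul_le_mul_left a hc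
    omega
  · intro h
    have h1 : a * (v + 1) ≤ a * j := Nat.mul_le_mul_left a h
    have h2 : a * (v + 1) = a * v + a := by ring
    omega

lemma vpf_bound {a b m n : ℕ} (ha : 1 ≤ a) (hb : 1 ≤ b) (hm : 2 ≤ m)
    (hnm : n + 1 = b * m) (α : Fin n → ℕ)
    (h : IsVPF n (fun k => if k % b = 0 then a else 0) α) :
    ∀ i, α i < a * m := by
  have h2 : 2 ≤ b * m := le_trans (by omega) (Nat.mul_le_mul hb hm)
  have hn1 : 1 ≤ n := by omega
  rw [isVPF_iff hb hnm α] at h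
  have := h (n - 1) (by omega)
  rw [show n - 1 + 1 = n by omega] at this
  have hle : ((univ : Finset (Fin n)).filter
      fun i => α i < a * ((n - 1) / b + 1)).card ≤ n := by
    calc _ ≤ (univ : Finset (Fin n)).card := card_filter_le _ _
      _ = n := by rw [card_univ, Fintype.card_fin]
  have huniv : ((univ : Finset (Fin n)).filter
      fun i => α i < a * ((n - 1) / b + 1)) = univ := by
    apply Finset.eq_univ_of_card
    rw [Fintype.card_fin]
    omega
  have hdivm : (n - 1) / b + 1 ≤ m := by
    have : (n - 1) / b < m := by
      rw [Nat.div_lt_iff_lt_mul (show 0 < b by omega)]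
      have : b * m = m * b := mul_comm b m
      omega
    omega
  intro i
  have hi : i ∈ ((univ : Finset (Fin n)).filter
      fun i => α i < a * ((n - 1) / b + 1)) := by rw [huniv]; exact mem_univ i
  rw [mem_filter] at hi
  exact lt_of_lt_of_le hi.2 (Nat.mul_le_mul_left a hdivm)

lemma vpf_good [NeZero m] {a b n : ℕ} (ha : 1 ≤ a) (hb : 1 ≤ b) (hm : 2 ≤ m)
    (hnm : n + 1 = b * m) (α : Fin n → ℕ)
    (h : IsVPF n (fun k => if k % b = 0 then a else 0) α) :
    Good m n b (fun i => ((α i / a : ℕ) : ZMod m)) := by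
  have hbound := vpf_bound ha hb hm hnm α h
  have hdm : ∀ i, α i / a < m := by
    intro i
    rw [Nat.div_lt_iff_lt_mul (show 0 < a by omega)]
    rw [mul_comm]
    exact hbound i
  rw [isVPF_iff hb hnm α] at h
  rw [good_iff hb hnm]
  intro jv hjv
  have := h jv hjv
  have hfeq : ((univ : Finset (Fin n)).filter
        fun i => (((α i / a : ℕ) : ZMod m)).val < jv / b + 1) =
      ((univ : Finset (Fin n)).filter fun i => α i < a * (jv / b + 1)) := by
    apply filter_congr
    intro i _
    rw [ZMod.val_cast_of_lt (hdm i)]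
    rw [Nat.div_lt_iff_lt_mul (show 0 < a by omega), mul_comm]
  rw [hfeq]
  exact this

lemma good_vpf [NeZero m] {a b n : ℕ} (ha : 1 ≤ a) (hb : 1 ≤ b) (hm : 2 ≤ m)
    (hnm : n + 1 = b * m) (u : Fin n → ZMod m) (r : Fin n → ℕ) (hr : ∀ i, r i < a)
    (h : Good m n b u) :
    IsVPF n (fun k => if k % b = 0 then a else 0) (fun i => a * (u i).val + r i) := by
  rw [isVPF_iff hb hnm]
  rw [good_iff hb hnm] at h
  intro jv hjv
  have := h jv hjv
  have hfeq : ((univ : Finset (Fin n)).filter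
        fun i => a * (u i).val + r i < a * (jv / b + 1)) =
      ((univ : Finset (Fin n)).filter fun i => (u i).val < jv / b + 1) := by
    apply filter_congr
    intro i _
    rw [div_bridge (show 0 < a by omega) (hr i)]
  rw [hfeq]
  exact this

end PF19

/-- The number of `y(a,b,m)`-parking functions is `a^{bm−1} m^{bm−2}`, where
`y(a,b,m) ∈ ℕ^{bm−1}` has `j`-th entry `a` if `j ≡ 1 (mod b)` (0-based: entry `k` is `a` iff
`k ≡ 0 (mod b)`) and `0` otherwise. -/
theorem stmt19 (a b m : ℕ) (ha : 1 ≤ a) (hb : 1 ≤ b) (hm : 2 ≤ m) :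
    Set.ncard {α : Fin (b * m - 1) → ℕ |
        IsVPF (b * m - 1) (fun k => if k % b = 0 then a else 0) α} =
      a ^ (b * m - 1) * m ^ (b * m - 2) := by
  have h2 : 2 ≤ b * m := le_trans (by omega) (Nat.mul_le_mul hb hm)
  haveI : NeZero m := ⟨by omega⟩
  set n := b * m - 1 with hn
  have hnm : n + 1 = b * m := by omega
  rw [← Nat.card_coe_set_eq]
  have ha0 : 0 < a := ha
  classical
  let F : {α : Fin n → ℕ // IsVPF n (fun k => if k % b = 0 then a else 0) α} →
      ({u : Fin n → ZMod m // PF19.Good m n b u} × (Fin n → Fin a)) :=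
    fun αp =>
      (⟨fun i => ((αp.1 i / a : ℕ) : ZMod m), PF19.vpf_good ha hb hm hnm αp.1 αp.2⟩,
       fun i => ⟨αp.1 i % a, Nat.mod_lt _ ha0⟩)
  have hF : Function.Bijective F := by
    constructor
    · rintro ⟨α, hα⟩ ⟨α', hα'⟩ h
      have hbd1 := PF19.vpf_bound ha hb hm hnm α hα
      have hbd2 := PF19.vpf_bound ha hb hm hnm α' hα'
      have hdm : ∀ i, α i / a < m := fun i => by
        rw [Nat.div_lt_iff_lt_mul ha0, mul_comm]; exact hbd1 i
      have hdm' : ∀ i, α' i / a < m := fun i => by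
        rw [Nat.div_lt_iff_lt_mul ha0, mul_comm]; exact hbd2 i
      have h1 := congrArg Prod.fst h
      have h2' := congrArg Prod.snd h
      simp only [F] at h1 h2'
      apply Subtype.ext
      funext i
      show α i = α' i
      have hdiv : α i / a = α' i / a := by
        have hci := congrFun (congrArg Subtype.val h1) i
        simp only at hci
        calc α i / a = (((α i / a : ℕ) : ZMod m)).val :=
              (ZMod.val_cast_of_lt (hdm i)).symm
          _ = (((α' i / a : ℕ) : ZMod m)).val := by rw [hci]
          _ = α' i / a := ZMod.val_cast_of_lt (hdm' i)
      have hmod : α i % a = α' i % a := congrArg Fin.val (congrFun h2' i)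
      conv_lhs => rw [← Nat.div_add_mod (α i) a]
      rw [hdiv, hmod, Nat.div_add_mod]
    · rintro ⟨⟨u, hu⟩, r⟩
      set α : Fin n → ℕ := fun i => a * (u i).val + (r i : ℕ) with hαd
      have hVPF : IsVPF n (fun k => if k % b = 0 then a else 0) α :=
        PF19.good_vpf ha hb hm hnm u (fun i => (r i : ℕ)) (fun i => (r i).isLt) hu
      refine ⟨⟨α, hVPF⟩, ?_⟩
      simp only [F]
      refine Prod.ext ?_ ?_
      · apply Subtype.ext
        funext i
        show ((α i / a : ℕ) : ZMod m) = u i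
        have hdiv : α i / a = (u i).val := by
          show (a * (u i).val + (r i : ℕ)) / a = (u i).val
          rw [Nat.mul_add_div ha0, Nat.div_eq_of_lt (r i).isLt, Nat.add_zero]
        rw [hdiv]
        exact ZMod.natCast_rightInverse (u i)
      · funext i
        apply Fin.ext
        show α i % a = (r i : ℕ)
        show (a * (u i).val + (r i : ℕ)) % a = (r i : ℕ)
        rw [Nat.mul_add_mod, Nat.mod_eq_of_lt (r i).isLt]
  have hcardeq : Nat.card ↥{α : Fin n → ℕ |
      IsVPF n (fun k => if k % b = 0 then a else 0) α} =
      Nat.card ({u : Fin n → ZMod m // PF19.Good m n b u} × (Fin n → Fin a)) :=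
    Nat.card_eq_of_bijective F hF
  rw [hcardeq, Nat.card_prod]
  have hgood : Nat.card {u : Fin n → ZMod m // PF19.Good m n b u} = m ^ (n - 1) := by
    have hc := PF19.card_good (b := b) hnm
    have hpow : m ^ n = m ^ (n - 1) * m := by
      rw [← pow_succ]
      congr 1
      omega
    rw [hpow] at hc
    exact Nat.eq_of_mul_eq_mul_right (by omega) hc
  have hfun : Nat.card (Fin n → Fin a) = a ^ n := by
    rw [Nat.card_fun]
    simp [Nat.card_eq_fintype_card]
  rw [hgood, hfun]
  rw [show n - 1 = b * m - 2 by omega]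
  ring
end
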